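/- Let A be a finite action model. The bisimulation-refinement partitions Ω_k^A of the event set stabilize: there exists k such that Ω_k^A = Ω_{k+1}^A, and the quotient action model [A]_k (events are the blocks, preconditions inherited, E₁ →_a E₂ iff some event of E₁ has an a-successor in E₂ with jointly satisfiable precondition/diamond-precondition) is action-bisimilar to A. -/
import Mathlib


/-- Modal formulas over label set `A` and proposition set `P`. -/
inductive Form (A P : Type) : Type
  | top : Form A P
  | atom : P → Form A P
  | neg : Form A P → Form A P
  | or : Form A P → Form A P → Form A P
  | dia : A → Form A P → Form A P

namespace Form
variable {A P : Type}
def and (φ ψ : Form A P) : Form A P := Form.neg ((Form.neg φ).or (Form.neg ψ))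
def box (a : A) (φ : Form A P) : Form A P := Form.neg (Form.dia a (Form.neg φ))
def bot : Form A P := Form.neg Form.top
def imp (φ ψ : Form A P) : Form A P := (Form.neg φ).or ψ
end Form

/-- Kripke models. -/
structure Kripke (A P : Type) : Type 1 where
  W : Type
  val : W → P → Prop
  rel : A → W → W → Prop
  actual : Set W

variable {A P : Type}

/-- Satisfaction of a modal formula at a world. -/
def sat (M : Kripke A P) : M.W → Form A P → Prop
  | _, .top => True
  | w, .atom p => M.val w p
  | w, .neg φ => ¬ sat M w φ
  | w, .or φ ψ => sat M w φ ∨ sat M w ψ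
  | w, .dia a φ => ∃ v, M.rel a w v ∧ sat M v φ

/-- Semantic entailment over all Kripke models. -/
def entails (φ ψ : Form A P) : Prop := ∀ (M : Kripke A P) (w : M.W), sat M w φ → sat M w ψ

/-- Semantic equivalence. -/
def equivF (φ ψ : Form A P) : Prop := entails φ ψ ∧ entails ψ φ

def satisfiable (φ : Form A P) : Prop := ∃ (M : Kripke A P) (w : M.W), sat M w φ

def valid (φ : Form A P) : Prop := ∀ (M : Kripke A P) (w : M.W), sat M w φ

/-- Finite disjunction (empty disjunction is `⊥`). -/
def bigOr : List (Form A P) → Form A P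
  | [] => Form.bot
  | φ :: l => φ.or (bigOr l)

/-- Finite conjunction (empty conjunction is `⊤`). -/
def bigAnd : List (Form A P) → Form A P
  | [] => Form.top
  | φ :: l => φ.and (bigAnd l)

/-- `⋀_{a ∈ A} □_a (ξ a)` for a finite label set `A`. -/
noncomputable def boxConj [Fintype A] (ξ : A → Form A P) : Form A P :=
  bigAnd ((Finset.univ : Finset A).toList.map fun a => Form.box a (ξ a))

/-- `R` is a bisimulation between Kripke models `M` and `N`. -/
def IsBisim (M N : Kripke A P) (R : M.W → N.W → Prop) : Prop :=
  ∀ w v, R w v →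
    ((∀ p, M.val w p ↔ N.val v p) ∧
     (∀ a w', M.rel a w w' → ∃ v', N.rel a v v' ∧ R w' v') ∧
     (∀ a v', N.rel a v v' → ∃ w', M.rel a w w' ∧ R w' v'))

/-- Pointed bisimilarity of Kripke models (Zig0/Zag0 on actual worlds). -/
def Bisimilar (M N : Kripke A P) : Prop :=
  ∃ R, IsBisim M N R ∧ (∀ w ∈ M.actual, ∃ v ∈ N.actual, R w v) ∧
       (∀ v ∈ N.actual, ∃ w ∈ M.actual, R w v)

/-- Action models. -/
structure ActionModel (A P : Type) : Type 1 where
  E : Type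
  pre : E → Form A P
  rel : A → E → E → Prop
  actual : Set E

/-- The update product `M ⊗ 𝔄`. -/
def update (M : Kripke A P) (𝔄 : ActionModel A P) : Kripke A P where
  W := {p : M.W × 𝔄.E // sat M p.1 (𝔄.pre p.2)}
  val w p := M.val w.1.1 p
  rel a w v := M.rel a w.1.1 v.1.1 ∧ 𝔄.rel a w.1.2 v.1.2
  actual := {w | w.1.1 ∈ M.actual ∧ w.1.2 ∈ 𝔄.actual}

/-- Action model equivalence: same updating effect (up to bisimilarity) on every Kripke model. -/
def AMEquiv (𝔄 𝔅 : ActionModel A P) : Prop :=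
  ∀ M : Kripke A P, Bisimilar (update M 𝔄) (update M 𝔅)

/-- `S` is an action bisimulation between action models `𝔄` and `𝔅`. -/
def IsActBisim (𝔄 𝔅 : ActionModel A P) (S : 𝔄.E → 𝔅.E → Prop) : Prop :=
  ∀ x y, S x y →
    (equivF (𝔄.pre x) (𝔅.pre y) ∧
     (∀ a x', 𝔄.rel a x x' → satisfiable ((𝔄.pre x).and (Form.dia a (𝔄.pre x'))) →
        ∃ y', 𝔅.rel a y y' ∧ S x' y') ∧
     (∀ a y', 𝔅.rel a y y' → satisfiable ((𝔅.pre y).and (Form.dia a (𝔅.pre y'))) →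
        ∃ x', 𝔄.rel a x x' ∧ S x' y'))

/-- Action bisimilarity of action models (with Zig0/Zag0 on actual events). -/
def ActBisimilar (𝔄 𝔅 : ActionModel A P) : Prop :=
  ∃ S, IsActBisim 𝔄 𝔅 S ∧ (∀ x ∈ 𝔄.actual, ∃ y ∈ 𝔅.actual, S x y) ∧
       (∀ y ∈ 𝔅.actual, ∃ x ∈ 𝔄.actual, S x y)

/-- Zig of the generalized action emulation:
`η(x,y) ⊨ □_a (Pre^𝔄(x') → ⋁_{y →_a y'} (Pre^𝔅(y') ∧ η(x',y')))`, rendered semantically. -/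
def GAEZig (𝔄 𝔅 : ActionModel A P) (η : 𝔄.E → 𝔅.E → Form A P) : Prop :=
  ∀ (a : A) (x : 𝔄.E) (y : 𝔅.E) (x' : 𝔄.E), 𝔄.rel a x x' →
    ∀ (M : Kripke A P) (w v : M.W), sat M w (η x y) → M.rel a w v → sat M v (𝔄.pre x') →
      ∃ y', 𝔅.rel a y y' ∧ sat M v (𝔅.pre y') ∧ sat M v (η x' y')

/-- Zag of the generalized action emulation. -/
def GAEZag (𝔄 𝔅 : ActionModel A P) (η : 𝔄.E → 𝔅.E → Form A P) : Prop :=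
  ∀ (a : A) (x : 𝔄.E) (y : 𝔅.E) (y' : 𝔅.E), 𝔅.rel a y y' →
    ∀ (M : Kripke A P) (w v : M.W), sat M w (η x y) → M.rel a w v → sat M v (𝔅.pre y') →
      ∃ x', 𝔄.rel a x x' ∧ sat M v (𝔄.pre x') ∧ sat M v (η x' y')

/-- Zig0 of the generalized action emulation:
`Pre^𝔄(x) ⊨ ⋁_{y ∈ E₀^𝔅} (Pre^𝔅(y) ∧ η(x,y))` for actual `x`. -/
def GAEZig0 (𝔄 𝔅 : ActionModel A P) (η : 𝔄.E → 𝔅.E → Form A P) : Prop :=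
  ∀ x ∈ 𝔄.actual, ∀ (M : Kripke A P) (w : M.W), sat M w (𝔄.pre x) →
    ∃ y ∈ 𝔅.actual, sat M w (𝔅.pre y) ∧ sat M w (η x y)

/-- Zag0 of the generalized action emulation. -/
def GAEZag0 (𝔄 𝔅 : ActionModel A P) (η : 𝔄.E → 𝔅.E → Form A P) : Prop :=
  ∀ y ∈ 𝔅.actual, ∀ (M : Kripke A P) (w : M.W), sat M w (𝔅.pre y) →
    ∃ x ∈ 𝔄.actual, sat M w (𝔄.pre x) ∧ sat M w (η x y)

/-- `η` is a generalized action emulation witnessing `𝔄 ⇄_G 𝔅`. -/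
def IsGAE (𝔄 𝔅 : ActionModel A P) (η : 𝔄.E → 𝔅.E → Form A P) : Prop :=
  GAEZig 𝔄 𝔅 η ∧ GAEZag 𝔄 𝔅 η ∧ GAEZig0 𝔄 𝔅 η ∧ GAEZag0 𝔄 𝔅 η

/-- `S` is a propositional action emulation witnessing `𝔄 ⇄_P 𝔅`
(Consistency, Zig, Zag, Zig0, Zag0; disjunctions rendered semantically). -/
def IsPAEW (𝔄 𝔅 : ActionModel A P) (S : 𝔄.E → 𝔅.E → Prop) : Prop :=
  (∀ x y, S x y → satisfiable ((𝔄.pre x).and (𝔅.pre y))) ∧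
  (∀ (a : A) x y x', S x y → 𝔄.rel a x x' →
     ∀ (M : Kripke A P) (w : M.W), sat M w (𝔄.pre x') →
       ∃ y', 𝔅.rel a y y' ∧ S x' y' ∧ sat M w (𝔅.pre y')) ∧
  (∀ (a : A) x y y', S x y → 𝔅.rel a y y' →
     ∀ (M : Kripke A P) (w : M.W), sat M w (𝔅.pre y') →
       ∃ x', 𝔄.rel a x x' ∧ S x' y' ∧ sat M w (𝔄.pre x')) ∧
  (∀ x ∈ 𝔄.actual, ∀ (M : Kripke A P) (w : M.W), sat M w (𝔄.pre x) →
     ∃ y ∈ 𝔅.actual, S x y ∧ sat M w (𝔅.pre y)) ∧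
  (∀ y ∈ 𝔅.actual, ∀ (M : Kripke A P) (w : M.W), sat M w (𝔅.pre y) →
     ∃ x ∈ 𝔄.actual, S x y ∧ sat M w (𝔄.pre x))

/-- `S` is an action emulation witnessing `𝔄 ⇄ 𝔅`
(Consistency, Zig, Zag, Zig0, Zag0; disjunctions and boxes rendered semantically). -/
def IsAEW (𝔄 𝔅 : ActionModel A P) (S : 𝔄.E → 𝔅.E → Prop) : Prop :=
  (∀ x y, S x y → satisfiable ((𝔄.pre x).and (𝔅.pre y))) ∧
  (∀ (a : A) x y x', S x y → 𝔄.rel a x x' →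
     ∀ (M : Kripke A P) (w v : M.W), sat M w (𝔄.pre x) → sat M w (𝔅.pre y) →
       M.rel a w v → sat M v (𝔄.pre x') →
       ∃ y', 𝔅.rel a y y' ∧ S x' y' ∧ sat M v (𝔅.pre y')) ∧
  (∀ (a : A) x y y', S x y → 𝔅.rel a y y' →
     ∀ (M : Kripke A P) (w v : M.W), sat M w (𝔄.pre x) → sat M w (𝔅.pre y) →
       M.rel a w v → sat M v (𝔅.pre y') →
       ∃ x', 𝔄.rel a x x' ∧ S x' y' ∧ sat M v (𝔄.pre x')) ∧
  (∀ x ∈ 𝔄.actual, ∀ (M : Kripke A P) (w : M.W), sat M w (𝔄.pre x) →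
     ∃ y ∈ 𝔅.actual, S x y ∧ sat M w (𝔅.pre y)) ∧
  (∀ y ∈ 𝔅.actual, ∀ (M : Kripke A P) (w : M.W), sat M w (𝔅.pre y) →
     ∃ x ∈ 𝔄.actual, S x y ∧ sat M w (𝔄.pre x))

/-- `L₀`: formulas `α` such that if `α` is satisfiable and `α ⊨ □_a φ` then `φ` is valid. -/
def L0 : Set (Form A P) :=
  {α | satisfiable α → ∀ (a : A) (φ : Form A P), entails α (Form.box a φ) → valid φ}

/-- `Φ` is `Ψ`-regular. -/
def Regular (Φ Ψ : Set (Form A P)) : Prop :=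
  ∀ φ ∈ Φ, ∀ ψ ∈ Ψ, entails ψ φ ∨ entails ψ φ.neg

/-- `Φ` is `Ψ`-basis: every `φ ∈ Φ` is equivalent to a disjunction of a subset of `Ψ`
(disjunction rendered semantically). -/
def IsBasisFor (Φ Ψ : Set (Form A P)) : Prop :=
  ∀ φ ∈ Φ, ∃ Ψ' ⊆ Ψ, ∀ (M : Kripke A P) (w : M.W), sat M w φ ↔ ∃ ψ ∈ Ψ', sat M w ψ

/-- `Φ` is `Ψ`-discrete: if `φ ∈ Φ` entails a finite disjunction `⋁_l ⋀_a □_a ξ_l^a`, then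
`φ ⊨ ⋁_l ⋁ G(⋀_a □_a ξ_l^a, Ψ)` (outer disjunctions rendered semantically). -/
def Discrete [Fintype A] (Φ Ψ : Set (Form A P)) : Prop :=
  ∀ φ ∈ Φ, ∀ (L : ℕ) (ξ : Fin L → A → Form A P),
    entails φ (bigOr ((List.finRange L).map fun l => boxConj (ξ l))) →
    ∀ (M : Kripke A P) (w : M.W), sat M w φ →
      ∃ (l : Fin L), ∃ ψ ∈ Ψ, entails ψ (boxConj (ξ l)) ∧ sat M w ψ

/-- `Φ` is `Ψ`-known: if `φ ∈ Φ` and `φ ⊨ □_a ξ`, then `φ ⊨ □_a ⋁ G(ξ, Ψ)`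
(inner disjunction rendered semantically). -/
def Known (Φ Ψ : Set (Form A P)) : Prop :=
  ∀ φ ∈ Φ, ∀ (a : A) (χ : Form A P), entails φ (Form.box a χ) →
    ∀ (M : Kripke A P) (w v : M.W), sat M w φ → M.rel a w v →
      ∃ ψ ∈ Ψ, entails ψ χ ∧ sat M v ψ

/-- `R_a^𝔄(x)`. -/
def Rset (𝔄 : ActionModel A P) (a : A) (x : 𝔄.E) : Set 𝔄.E :=
  {y | satisfiable ((𝔄.pre x).and (Form.dia a (𝔄.pre y)))}

/-- `Q_a^𝔄(x)`. -/
def Qset (𝔄 : ActionModel A P) (a : A) (x : 𝔄.E) : Set 𝔄.E :=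
  {y | 𝔄.rel a x y ∧ satisfiable ((𝔄.pre x).and (Form.dia a (𝔄.pre y)))}

/-- Modal depth. -/
def depth : Form A P → ℕ
  | .top => 0
  | .atom _ => 0
  | .neg φ => depth φ
  | .or φ ψ => max (depth φ) (depth ψ)
  | .dia _ φ => depth φ + 1

/-- Subformulas. -/
def Subf : Form A P → List (Form A P)
  | .top => [.top]
  | .atom p => [.atom p]
  | .neg φ => .neg φ :: Subf φ
  | .or φ ψ => .or φ ψ :: (Subf φ ++ Subf ψ)
  | .dia a φ => .dia a φ :: Subf φ

/-- Single negation. -/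
def singleNeg : Form A P → Form A P
  | .neg φ => φ
  | φ => .neg φ

/-- Closure under subformulas and single negations. -/
def closureF (φ : Form A P) : Set (Form A P) :=
  {χ | χ ∈ Subf φ ∨ ∃ ψ ∈ Subf φ, χ = singleNeg ψ}

/-- The bisimulation-refinement relations `∼_k` on the events of an action model:
`x ∼₀ y` iff `Pre(x) ≡ Pre(y)`; `x ∼_{k+1} y` iff `x ∼_k y` and for every block of `∼_k`
and every label `a`, `Q_a(x)` meets the block iff `Q_a(y)` does. -/
def simRel (𝔄 : ActionModel A P) : ℕ → 𝔄.E → 𝔄.E → Prop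
  | 0, x, y => equivF (𝔄.pre x) (𝔄.pre y)
  | (k+1), x, y => simRel 𝔄 k x y ∧
      ∀ (a : A) (z : 𝔄.E),
        (∃ x' ∈ Qset 𝔄 a x, simRel 𝔄 k z x') ↔ (∃ y' ∈ Qset 𝔄 a y, simRel 𝔄 k z y')

/-- The quotient action model `[𝔄]_k`: events are the blocks of `∼_k`, the precondition of a
block is the precondition of a (choice of) member, blocks are related iff some members are
`Q`-related, and a block is actual iff it meets the actual events. -/
noncomputable def quotModel (𝔄 : ActionModel A P) (k : ℕ) : ActionModel A P where
  E := {S : Set 𝔄.E // ∃ x, S = {y | simRel 𝔄 k x y}}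
  pre S := 𝔄.pre S.2.choose
  rel a S T := ∃ x ∈ S.1, ∃ y ∈ T.1, y ∈ Qset 𝔄 a x
  actual := {S | ∃ x ∈ S.1, x ∈ 𝔄.actual}

lemma equivF_refl (φ : Form A P) : equivF φ φ := ⟨fun _ _ h => h, fun _ _ h => h⟩

lemma equivF_symm {φ ψ : Form A P} (h : equivF φ ψ) : equivF ψ φ := ⟨h.2, h.1⟩

lemma equivF_trans {φ ψ χ : Form A P} (h1 : equivF φ ψ) (h2 : equivF ψ χ) : equivF φ χ :=
  ⟨fun M w hw => h2.1 M w (h1.1 M w hw), fun M w hw => h1.2 M w (h2.2 M w hw)⟩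

lemma simRel_refl (𝔄 : ActionModel A P) : ∀ k x, simRel 𝔄 k x x
  | 0, _ => equivF_refl _
  | (_+1), x => ⟨simRel_refl 𝔄 _ x, fun _ _ => Iff.rfl⟩

lemma simRel_symm (𝔄 : ActionModel A P) : ∀ k {x y}, simRel 𝔄 k x y → simRel 𝔄 k y x
  | 0, _, _, h => equivF_symm h
  | (k+1), _, _, h => ⟨simRel_symm 𝔄 k h.1, fun a z => (h.2 a z).symm⟩

lemma simRel_trans (𝔄 : ActionModel A P) :
    ∀ k {x y z}, simRel 𝔄 k x y → simRel 𝔄 k y z → simRel 𝔄 k x z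
  | 0, _, _, _, h1, h2 => equivF_trans h1 h2
  | (k+1), _, _, _, h1, h2 => ⟨simRel_trans 𝔄 k h1.1 h2.1, fun a w => (h1.2 a w).trans (h2.2 a w)⟩

lemma simRel_equivF (𝔄 : ActionModel A P) :
    ∀ k {x y}, simRel 𝔄 k x y → equivF (𝔄.pre x) (𝔄.pre y)
  | 0, _, _, h => h
  | (k+1), _, _, h => simRel_equivF 𝔄 k h.1

lemma exists_stab (𝔄 : ActionModel A P) [Fintype 𝔄.E] :
    ∃ k, ∀ x y, simRel 𝔄 k x y ↔ simRel 𝔄 (k+1) x y := by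
  classical
  let f : ℕ → Finset (𝔄.E × 𝔄.E) := fun k => Finset.univ.filter (fun p => simRel 𝔄 k p.1 p.2)
  have hsub : ∀ k, f (k+1) ⊆ f k := by
    intro k p hp
    simp only [f, Finset.mem_filter] at *
    exact ⟨hp.1, hp.2.1⟩
  by_contra hcon
  push_neg at hcon
  have hlt : ∀ k, (f (k+1)).card < (f k).card := by
    intro k
    obtain ⟨x, y, hxy⟩ := hcon k
    have hk : simRel 𝔄 k x y ∧ ¬ simRel 𝔄 (k+1) x y := by
      have himp : simRel 𝔄 (k+1) x y → simRel 𝔄 k x y := And.left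
      tauto
    refine Finset.card_lt_card (Finset.ssubset_iff_of_subset (hsub k) |>.2 ⟨(x, y), ?_, ?_⟩)
    · simp only [f, Finset.mem_filter]; exact ⟨Finset.mem_univ _, hk.1⟩
    · simp only [f, Finset.mem_filter]; exact fun h => hk.2 h.2
  have hbound : ∀ n, (f n).card + n ≤ (f 0).card := by
    intro n; induction n with
    | zero => simp
    | succ n ih => have := hlt n; omega
  have := hbound ((f 0).card + 1)
  omega

/-- for a finite action model the refinement partitions stabilize at some `k`
with `∼_k = ∼_{k+1}`, and the quotient `[𝔄]_k` is action-bisimilar to `𝔄`. -/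
theorem refinement_stabilizes_and_bisim (𝔄 : ActionModel A P) [Fintype 𝔄.E] :
    ∃ k, (∀ x y, simRel 𝔄 k x y ↔ simRel 𝔄 (k+1) x y) ∧
      ActBisimilar 𝔄 (quotModel 𝔄 k) := by
  obtain ⟨k, hk⟩ := exists_stab 𝔄
  have hmem : ∀ (T : (quotModel 𝔄 k).E) (x : 𝔄.E),
      x ∈ T.1 ↔ simRel 𝔄 k T.2.choose x := by
    intro T x
    exact Set.ext_iff.mp T.2.choose_spec x
  refine ⟨k, hk, fun x T => x ∈ T.1, ?_, ?_, ?_⟩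
  · intro x T hxT
    refine ⟨equivF_symm (simRel_equivF 𝔄 k ((hmem T x).1 hxT)), ?_, ?_⟩
    · -- Zig
      intro a x' hrel hsat
      refine ⟨⟨{y | simRel 𝔄 k x' y}, ⟨x', rfl⟩⟩, ?_, simRel_refl 𝔄 k x'⟩
      exact ⟨x, hxT, x', simRel_refl 𝔄 k x', hrel, hsat⟩
    · -- Zag
      intro a T' hrel _
      obtain ⟨u, huT, v, hvT', hvQ⟩ := hrel
      have hxu : simRel 𝔄 k x u :=
        simRel_trans 𝔄 k (simRel_symm 𝔄 k ((hmem T x).1 hxT)) ((hmem T u).1 huT)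
      have hxu1 : simRel 𝔄 (k+1) x u := (hk x u).1 hxu
      have : ∃ x'' ∈ Qset 𝔄 a x, simRel 𝔄 k v x'' :=
        (hxu1.2 a v).2 ⟨v, hvQ, simRel_refl 𝔄 k v⟩
      obtain ⟨x'', hx''Q, hvx''⟩ := this
      refine ⟨x'', hx''Q.1, ?_⟩
      exact (hmem T' x'').2 (simRel_trans 𝔄 k ((hmem T' v).1 hvT') hvx'')
  · -- Zig0
    intro x hx
    exact ⟨⟨{y | simRel 𝔄 k x y}, ⟨x, rfl⟩⟩, ⟨x, simRel_refl 𝔄 k x, hx⟩, simRel_refl 𝔄 k x⟩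
  · -- Zag0
    intro T hT
    obtain ⟨u, huT, hu⟩ := hT
    exact ⟨u, hu, huT⟩
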